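/- If ω(s,t) ≥ 1 is a control value and a partition s = t_0 < ⋯ < t_n = t satisfies ω(t_j, t_{j+1}) = 1 for j = 0,…,n−2 and ω(t_{n−1}, t_n) ≤ 1, then n ≤ 2 ω(s,t). More generally, for α ∈ (0,1], if ω(t_j,t_{j+1}) = α for j = 0,…,m−2 and ω(t_{m−1},t_m) ≤ α, then m ≤ 2 α^{−1} ω^α(s,t), where ω^α is the α-truncated control sup_{partitions with ω(t_i,t_{i+1}) ≤ α} Σ ω(t_i,t_{i+1}). -/

import Mathlib

/-!
Statement 14: if `ω(s,t) ≥ 1` and a partition `s = t₀ < ⋯ < t_n = t` has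
`ω(t_j,t_{j+1}) = 1` for `j ≤ n−2` and `ω(t_{n−1},t_n) ≤ 1`, then
`n ≤ 2 ω(s,t)`. More generally, for `α ∈ (0,1]`, if `ω(t_j,t_{j+1}) = α` for
`j ≤ m−2` and `ω(t_{m−1},t_m) ≤ α` (with `m ≥ 2`), then
`m ≤ 2 α⁻¹ ω^α(s,t)` where `ω^α` is the `α`-truncated control.
-/

noncomputable section
open scoped BigOperators

def partSums (ω : ℝ → ℝ → ℝ) (α s t : ℝ) : Set ℝ :=
  {x | ∃ (n : ℕ) (u : Fin (n + 1) → ℝ), Monotone u ∧ u 0 = s ∧ u (Fin.last n) = t ∧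
      (∀ i : Fin n, ω (u i.castSucc) (u i.succ) ≤ α) ∧
      x = ∑ i : Fin n, ω (u i.castSucc) (u i.succ)}

def omegaTrunc (ω : ℝ → ℝ → ℝ) (α s t : ℝ) : ℝ := sSup (partSums ω α s t)

lemma sum_le_control (T : ℝ) (ω : ℝ → ℝ → ℝ)
    (hnonneg : ∀ s t, 0 ≤ ω s t)
    (hsuper : ∀ s u t, 0 ≤ s → s ≤ u → u ≤ t → t ≤ T → ω s u + ω u t ≤ ω s t) :
    ∀ (n : ℕ) (u : Fin (n + 1) → ℝ), Monotone u → 0 ≤ u 0 → u (Fin.last n) ≤ T →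
      ∑ i : Fin n, ω (u i.castSucc) (u i.succ) ≤ ω (u 0) (u (Fin.last n)) := by
  intro n
  induction n with
  | zero => intro u _ _ _; simpa using hnonneg (u 0) (u (Fin.last 0))
  | succ k ih =>
    intro u hu h0 hT
    rw [Fin.sum_univ_castSucc]
    have hmono : Monotone (fun i : Fin (k + 1) => u i.castSucc) :=
      fun a b hab => hu (Fin.castSucc_le_castSucc_iff.mpr hab)
    have key := ih (fun i => u i.castSucc) hmono (by simpa using h0)
      (le_trans (hu (Fin.le_last _)) hT)
    simp only [Fin.castSucc_zero] at key
    have hs := hsuper (u 0) (u ((Fin.last k).castSucc)) (u (Fin.last (k + 1)))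
      h0 (hu (Fin.zero_le _)) (hu (Fin.le_last _)) hT
    have hlast : (Fin.last k).succ = Fin.last (k + 1) := Fin.succ_last k
    rw [hlast]
    simp only [Fin.succ_castSucc]
    linarith [key, hs]

theorem partition_count_bound (T : ℝ) (hT : 0 ≤ T) (ω : ℝ → ℝ → ℝ)
    (hnonneg : ∀ s t, 0 ≤ ω s t) (hdiag : ∀ s, ω s s = 0)
    (hsuper : ∀ s u t, 0 ≤ s → s ≤ u → u ≤ t → t ≤ T → ω s u + ω u t ≤ ω s t) :
    (∀ s t, 0 ≤ s → s ≤ t → t ≤ T → 1 ≤ ω s t →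
      ∀ (n : ℕ) (u : Fin (n + 1) → ℝ), Monotone u → u 0 = s → u (Fin.last n) = t →
        (∀ i : Fin n, (i : ℕ) < n - 1 → ω (u i.castSucc) (u i.succ) = 1) →
        (∀ i : Fin n, (i : ℕ) = n - 1 → ω (u i.castSucc) (u i.succ) ≤ 1) →
        (n : ℝ) ≤ 2 * ω s t) ∧
    (∀ α : ℝ, 0 < α → α ≤ 1 → ∀ s t, 0 ≤ s → s ≤ t → t ≤ T →
      ∀ m : ℕ, 2 ≤ m →
      ∀ u : Fin (m + 1) → ℝ, Monotone u → u 0 = s → u (Fin.last m) = t →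
        (∀ i : Fin m, (i : ℕ) < m - 1 → ω (u i.castSucc) (u i.succ) = α) →
        (∀ i : Fin m, (i : ℕ) = m - 1 → ω (u i.castSucc) (u i.succ) ≤ α) →
        (m : ℝ) ≤ 2 * α⁻¹ * omegaTrunc ω α s t) := by
  constructor
  · intro s t hs hst htT hω n u hu hu0 hun hint _hlast
    have hsum : ∑ i : Fin n, ω (u i.castSucc) (u i.succ) ≤ ω s t := by
      have := sum_le_control T ω hnonneg hsuper n u hu (hu0 ▸ hs) (hun ▸ htT)
      rwa [hu0, hun] at this
    rcases Nat.lt_or_ge n 2 with h2 | h2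
    · have : (n : ℝ) ≤ 2 := by exact_mod_cast (by omega : n ≤ 2)
      linarith
    · obtain ⟨k, rfl⟩ : ∃ k, n = k + 2 := ⟨n - 2, by omega⟩
      rw [Fin.sum_univ_castSucc] at hsum
      have hones : ∑ i : Fin (k + 1),
          ω (u (i.castSucc).castSucc) (u (i.castSucc).succ) = (k + 1 : ℝ) := by
        rw [Finset.sum_congr rfl (fun i _ => hint i.castSucc (by simp only [Fin.coe_castSucc]; omega))]
        simp
      rw [hones] at hsum
      have hnn := hnonneg (u (Fin.last (k + 1)).castSucc) (u (Fin.last (k + 1)).succ)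
      push_cast
      linarith
  · intro α hα0 hα1 s t hs hst htT m hm u hu hu0 hun hint hlast
    have hpiece : ∀ i : Fin m, ω (u i.castSucc) (u i.succ) ≤ α := by
      intro i
      rcases Nat.lt_or_ge (i : ℕ) (m - 1) with h | h
      · exact le_of_eq (hint i h)
      · exact hlast i (by have := i.isLt; omega)
    have hbdd : BddAbove (partSums ω α s t) := by
      refine ⟨ω s t, ?_⟩
      rintro x ⟨n, v, hv, hv0, hvn, _, rfl⟩
      have := sum_le_control T ω hnonneg hsuper n v hv (hv0 ▸ hs) (hvn ▸ htT)
      rwa [hv0, hvn] at this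
    have hmem : (∑ i : Fin m, ω (u i.castSucc) (u i.succ)) ∈ partSums ω α s t :=
      ⟨m, u, hu, hu0, hun, hpiece, rfl⟩
    have hle : (∑ i : Fin m, ω (u i.castSucc) (u i.succ)) ≤ omegaTrunc ω α s t :=
      le_csSup hbdd hmem
    obtain ⟨k, rfl⟩ : ∃ k, m = k + 2 := ⟨m - 2, by omega⟩
    have hsum : ((k : ℝ) + 1) * α ≤ ∑ i : Fin (k + 2), ω (u i.castSucc) (u i.succ) := by
      rw [Fin.sum_univ_castSucc]
      have hones : ∑ i : Fin (k + 1),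
          ω (u (i.castSucc).castSucc) (u (i.castSucc).succ) = ((k : ℝ) + 1) * α := by
        rw [Finset.sum_congr rfl (fun i _ => hint i.castSucc (by simp only [Fin.coe_castSucc]; omega))]
        simp [mul_comm]
      have hnn := hnonneg (u (Fin.last (k + 1)).castSucc) (u (Fin.last (k + 1)).succ)
      linarith [hones.ge, hones.le]
    have htr : ((k : ℝ) + 1) * α ≤ omegaTrunc ω α s t := le_trans hsum hle
    have hkey : 2 * α⁻¹ * (((k : ℝ) + 1) * α) = 2 * ((k : ℝ) + 1) := by
      field_simp
    have h1 : 2 * α⁻¹ * (((k : ℝ) + 1) * α) ≤ 2 * α⁻¹ * omegaTrunc ω α s t := by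
      apply mul_le_mul_of_nonneg_left htr
      positivity
    rw [hkey] at h1
    push_cast
    linarith

end
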